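/- Let θ, θ' ∈ ℝ with cos θ · sin θ ≠ 0, and suppose S₁ Rot(e₃, θ) S₂⁻¹ = S₁' Rot(e₃, θ') S₂'⁻¹, where S₁, S₂, S₁', S₂' are 3×3 diagonal matrices with positive diagonal entries. Then Rot(e₃, θ') = Rot(e₃, θ), and there exist real numbers μ > 0 and ν > 0 such that S₁' = Λ S₁ and S₂' = Λ S₂ with Λ = diag(μ, μ, ν). (That is, when exactly one pair of gyroscope axes is parallel, the rotation is uniquely determined, the four scale factors of the non-parallel axes are determined up to one common scale μ, and the two scale factors of the parallel axes are determined up to a second common scale ν.) -/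

import Mathlib

/-- The rotation matrix `Rot(e₃, θ)` about the third axis by angle `θ`. -/
noncomputable def Rot3 (θ : ℝ) : Matrix (Fin 3) (Fin 3) ℝ :=
  !![Real.cos θ, -Real.sin θ, 0;
     Real.sin θ,  Real.cos θ, 0;
     0, 0, 1]

/-- if `S₁ Rot(e₃, θ) S₂⁻¹ = S₁' Rot(e₃, θ') S₂'⁻¹` with
`cos θ · sin θ ≠ 0` and all scale matrices positive diagonal, then
`Rot(e₃, θ') = Rot(e₃, θ)` and, for some `μ, ν > 0` and `Λ = diag(μ, μ, ν)`,
`S₁' = Λ S₁` and `S₂' = Λ S₂`. -/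
theorem stmt13 (θ θ' : ℝ) (hθ : Real.cos θ * Real.sin θ ≠ 0)
    (s₁ s₂ s₁' s₂' : Fin 3 → ℝ)
    (h₁ : ∀ i, 0 < s₁ i) (h₂ : ∀ i, 0 < s₂ i)
    (h₁' : ∀ i, 0 < s₁' i) (h₂' : ∀ i, 0 < s₂' i)
    (hEq : Matrix.diagonal s₁ * Rot3 θ * (Matrix.diagonal s₂)⁻¹ =
      Matrix.diagonal s₁' * Rot3 θ' * (Matrix.diagonal s₂')⁻¹) :
    Rot3 θ' = Rot3 θ ∧
    ∃ μ ν : ℝ, 0 < μ ∧ 0 < ν ∧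
      Matrix.diagonal s₁' = Matrix.diagonal ![μ, μ, ν] * Matrix.diagonal s₁ ∧
      Matrix.diagonal s₂' = Matrix.diagonal ![μ, μ, ν] * Matrix.diagonal s₂ := by
  have hc : Real.cos θ ≠ 0 := left_ne_zero_of_mul hθ
  have hs : Real.sin θ ≠ 0 := right_ne_zero_of_mul hθ
  have inv2 : (Matrix.diagonal s₂)⁻¹ = Matrix.diagonal (fun i => (s₂ i)⁻¹) := by
    apply Matrix.inv_eq_left_inv
    have h : (fun i => (s₂ i)⁻¹ * s₂ i) = fun _ => (1:ℝ) :=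
      funext fun i => inv_mul_cancel₀ (h₂ i).ne'
    rw [Matrix.diagonal_mul_diagonal, h, Matrix.diagonal_one]
  have inv2' : (Matrix.diagonal s₂')⁻¹ = Matrix.diagonal (fun i => (s₂' i)⁻¹) := by
    apply Matrix.inv_eq_left_inv
    have h : (fun i => (s₂' i)⁻¹ * s₂' i) = fun _ => (1:ℝ) :=
      funext fun i => inv_mul_cancel₀ (h₂' i).ne'
    rw [Matrix.diagonal_mul_diagonal, h, Matrix.diagonal_one]
  rw [inv2, inv2'] at hEq
  have key : ∀ i j, s₁ i * Rot3 θ i j * (s₂ j)⁻¹ = s₁' i * Rot3 θ' i j * (s₂' j)⁻¹ := by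
    intro i j
    have := congrFun (congrFun hEq i) j
    simpa [Matrix.diagonal_mul, Matrix.mul_diagonal] using this
  have E00 := key 0 0
  have E01 := key 0 1
  have E10 := key 1 0
  have E11 := key 1 1
  have E22 := key 2 2
  simp [Rot3] at E00 E01 E10 E11 E22
  -- cross-multiplied versions
  have F00 : s₁ 0 * Real.cos θ * s₂' 0 = s₁' 0 * Real.cos θ' * s₂ 0 := by
    have h := E00; field_simp [(h₂ 0).ne', (h₂' 0).ne'] at h; linear_combination h
  have F01 : s₁ 0 * Real.sin θ * s₂' 1 = s₁' 0 * Real.sin θ' * s₂ 1 := by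
    have h := E01; field_simp [(h₂ 1).ne', (h₂' 1).ne'] at h; linear_combination h
  have F10 : s₁ 1 * Real.sin θ * s₂' 0 = s₁' 1 * Real.sin θ' * s₂ 0 := by
    have h := E10; field_simp [(h₂ 0).ne', (h₂' 0).ne'] at h; linear_combination h
  have F11 : s₁ 1 * Real.cos θ * s₂' 1 = s₁' 1 * Real.cos θ' * s₂ 1 := by
    have h := E11; field_simp [(h₂ 1).ne', (h₂' 1).ne'] at h; linear_combination h
  have F22 : s₁ 2 * s₂' 2 = s₁' 2 * s₂ 2 := by
    have h := E22; field_simp [(h₂ 2).ne', (h₂' 2).ne'] at h; linear_combination h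
  set a := s₁ 0; set b := s₁ 1; set c := s₂ 0; set d := s₂ 1
  set a' := s₁' 0; set b' := s₁' 1; set c' := s₂' 0; set d' := s₂' 1
  have P1 : a*b*c'*d'*Real.cos θ^2 = a'*b'*c*d*Real.cos θ'^2 := by
    linear_combination (b*Real.cos θ*d')*F00 + (a'*Real.cos θ'*c)*F11
  have P2 : a*b*c'*d'*Real.sin θ^2 = a'*b'*c*d*Real.sin θ'^2 := by
    linear_combination (b*Real.sin θ*c')*F01 + (a'*Real.sin θ'*d)*F10
  have hK : a*b*c'*d' = a'*b'*c*d := by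
    linear_combination P1 + P2 - (a*b*c'*d')*(Real.sin_sq_add_cos_sq θ)
      + (a'*b'*c*d)*(Real.sin_sq_add_cos_sq θ')
  have hKpos : 0 < a'*b'*c*d := by
    have := h₁' 0; have := h₁' 1; have := h₂ 0; have := h₂ 1; positivity
  have hc2 : Real.cos θ' ^ 2 = Real.cos θ ^ 2 := by
    have h0 : (a'*b'*c*d) * (Real.cos θ'^2 - Real.cos θ^2) = 0 := by
      linear_combination -P1 + Real.cos θ^2 * hK
    rcases mul_eq_zero.mp h0 with h | h
    · exact absurd h hKpos.ne'
    · linarith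
  have hs2 : Real.sin θ' ^ 2 = Real.sin θ ^ 2 := by
    have h0 : (a'*b'*c*d) * (Real.sin θ'^2 - Real.sin θ^2) = 0 := by
      linear_combination -P2 + Real.sin θ^2 * hK
    rcases mul_eq_zero.mp h0 with h | h
    · exact absurd h hKpos.ne'
    · linarith
  have hcc : Real.cos θ' = Real.cos θ := by
    have hf : (Real.cos θ' - Real.cos θ) * (Real.cos θ' + Real.cos θ) = 0 := by
      linear_combination hc2
    rcases mul_eq_zero.mp hf with h | h
    · linarith
    · exfalso
      have hz : Real.cos θ * (a*c' + a'*c) = 0 := by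
        linear_combination F00 + (a'*c)*h
      have hp : 0 < a*c' + a'*c := by
        have := h₁ 0; have := h₁' 0; have := h₂ 0; have := h₂' 0; positivity
      rcases mul_eq_zero.mp hz with h' | h'
      · exact hc h'
      · exact hp.ne' h'
  have hss : Real.sin θ' = Real.sin θ := by
    have hf : (Real.sin θ' - Real.sin θ) * (Real.sin θ' + Real.sin θ) = 0 := by
      linear_combination hs2
    rcases mul_eq_zero.mp hf with h | h
    · linarith
    · exfalso
      have hz : Real.sin θ * (a*d' + a'*d) = 0 := by
        linear_combination F01 + (a'*d)*h
      have hp : 0 < a*d' + a'*d := by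
        have := h₁ 0; have := h₁' 0; have := h₂ 1; have := h₂' 1; positivity
      rcases mul_eq_zero.mp hz with h' | h'
      · exact hs h'
      · exact hp.ne' h'
  simp only [hcc, hss] at F00 F01 F10 F11
  have G0 : a * c' = a' * c := by
    apply mul_left_cancel₀ hc; linear_combination F00
  have G1 : a * d' = a' * d := by
    apply mul_left_cancel₀ hs; linear_combination F01
  have G2 : b * d' = b' * d := by
    apply mul_left_cancel₀ hc; linear_combination F11
  have hb : b' * a = a' * b := by
    have h0 : (b'*a - a'*b) * d = 0 := by linear_combination b*G1 - a*G2
    rcases mul_eq_zero.mp h0 with h | h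
    · linarith
    · exact absurd h (h₂ 1).ne'
  refine ⟨by rw [Rot3, Rot3, hcc, hss], a'/a, s₁' 2 / s₁ 2,
    div_pos (h₁' 0) (h₁ 0), div_pos (h₁' 2) (h₁ 2), ?_, ?_⟩
  · rw [Matrix.diagonal_mul_diagonal]
    refine congrArg Matrix.diagonal (funext fun i => ?_)
    fin_cases i
    · simpa using (div_mul_cancel₀ a' (h₁ 0).ne').symm
    · show b' = ![a'/a, a'/a, s₁' 2 / s₁ 2] 1 * b
      rw [Matrix.cons_val_one, Matrix.cons_val_zero, div_mul_eq_mul_div,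
        eq_div_iff (h₁ 0).ne']
      linear_combination hb
    · simpa using (div_mul_cancel₀ (s₁' 2) (h₁ 2).ne').symm
  · rw [Matrix.diagonal_mul_diagonal]
    refine congrArg Matrix.diagonal (funext fun i => ?_)
    fin_cases i
    · show c' = ![a'/a, a'/a, s₁' 2 / s₁ 2] 0 * c
      rw [Matrix.cons_val_zero, div_mul_eq_mul_div, eq_div_iff (h₁ 0).ne']
      linear_combination G0
    · show d' = ![a'/a, a'/a, s₁' 2 / s₁ 2] 1 * d
      rw [Matrix.cons_val_one, Matrix.cons_val_zero, div_mul_eq_mul_div,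
        eq_div_iff (h₁ 0).ne']
      linear_combination G1
    · show s₂' 2 = ![a'/a, a'/a, s₁' 2 / s₁ 2] 2 * s₂ 2
      rw [Matrix.cons_val_two, Matrix.tail_cons, Matrix.head_cons,
        div_mul_eq_mul_div, eq_div_iff (h₁ 2).ne']
      linear_combination F22
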